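/- arXiv:1307.6885 — 2 statements merged into one kernel-verified Lean document; each statement's English description precedes it below -/
import Mathlib

section
/- Let B ∈ ℂ^{n×n} be Hermitian positive definite, C ∈ ℂ^{n×n}, and Ω ∈ ℂ^{n×ℓ}. Suppose CΩ = QR where Q ∈ ℂ^{n×ℓ} satisfies Q*BQ = I_ℓ and R ∈ ℂ^{ℓ×ℓ}, and let P_B = QQ*B. Then for every matrix F ∈ ℂ^{ℓ×n}, ‖(I − P_B)C‖_B ≤ 2·‖C − CΩF‖_B. -/
open Matrix ComplexOrder

noncomputable section

/-- Euclidean (ℓ²) norm of a complex vector. -/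
def vecNorm2 {m : Type*} [Fintype m] (x : m → ℂ) : ℝ :=
  Real.sqrt (∑ i, ‖x i‖ ^ 2)

/-- Spectral (ℓ²-operator) norm of a complex matrix. -/
def specNorm {m p : Type*} [Fintype m] [Fintype p] (M : Matrix m p ℂ) : ℝ :=
  sSup {t : ℝ | ∃ x : p → ℂ, x ≠ 0 ∧ t = vecNorm2 (M *ᵥ x) / vecNorm2 x}

/-- The B-inner product ⟨x,y⟩_B = y*Bx. -/
def Binner {m : Type*} [Fintype m] (B : Matrix m m ℂ) (x y : m → ℂ) : ℂ :=
  star y ⬝ᵥ B *ᵥ x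

/-- The B-norm of a vector, ‖x‖_B = √(x*Bx). -/
def vecBnorm {m : Type*} [Fintype m] (B : Matrix m m ℂ) (x : m → ℂ) : ℝ :=
  Real.sqrt (star x ⬝ᵥ B *ᵥ x).re

/-- The induced B-norm of a matrix, ‖M‖_B = sup_{x ≠ 0} ‖Mx‖_B / ‖x‖_B. -/
def matBnorm {m : Type*} [Fintype m] (B M : Matrix m m ℂ) : ℝ :=
  sSup {t : ℝ | ∃ x : m → ℂ, x ≠ 0 ∧ t = vecBnorm B (M *ᵥ x) / vecBnorm B x}

open scoped Matrix.Norms.L2Operator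

namespace Matrix.PosSemidef

open scoped MatrixOrder in
def sqrt {n : ℕ} {A : Matrix (Fin n) (Fin n) ℂ} (_hA : A.PosSemidef) :
    Matrix (Fin n) (Fin n) ℂ :=
  CFC.sqrt A

open scoped MatrixOrder in
lemma posSemidef_sqrt {n : ℕ} {A : Matrix (Fin n) (Fin n) ℂ} (hA : A.PosSemidef) :
    hA.sqrt.PosSemidef :=
  (CFC.sqrt_nonneg A).posSemidef

open scoped MatrixOrder in
lemma sqrt_mul_self {n : ℕ} {A : Matrix (Fin n) (Fin n) ℂ} (hA : A.PosSemidef) :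
    hA.sqrt * hA.sqrt = A :=
  CFC.sqrt_mul_sqrt_self A hA.nonneg

end Matrix.PosSemidef

lemma sqrt_dot_eq {n : ℕ} (S : Matrix (Fin n) (Fin n) ℂ) (z : Fin n → ℂ) (hSH : Sᴴ = S) :
    Real.sqrt (star z ⬝ᵥ (S * S) *ᵥ z).re
      = ‖(EuclideanSpace.equiv (Fin n) ℂ).symm (S *ᵥ z)‖ := by
  rw [← mulVec_mulVec, dotProduct_mulVec, ← hSH, ← star_mulVec, hSH]
  rw [EuclideanSpace.norm_eq]
  congr 1
  rw [dotProduct, Complex.re_sum]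
  refine Finset.sum_congr rfl fun i _ => ?_
  have : ((EuclideanSpace.equiv (Fin n) ℂ).symm (S *ᵥ z)) i = (S *ᵥ z) i := rfl
  rw [this, mul_comm]
  simp only [Pi.star_apply, Complex.mul_conj, Complex.ofReal_re]
  rw [Complex.sq_norm, Complex.normSq_apply, Complex.mul_re]
  simp [Complex.star_def]

section main
variable {n : ℕ} {B : Matrix (Fin n) (Fin n) ℂ}

lemma vecBnorm_eq_sqrtMul (hB : B.PosDef) (z : Fin n → ℂ) :
    vecBnorm B z = ‖(EuclideanSpace.equiv (Fin n) ℂ).symm (hB.posSemidef.sqrt *ᵥ z)‖ := by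
  have h := sqrt_dot_eq hB.posSemidef.sqrt z hB.posSemidef.posSemidef_sqrt.1
  rw [hB.posSemidef.sqrt_mul_self] at h
  exact h

lemma sqrt_isUnit_det (hB : B.PosDef) : IsUnit hB.posSemidef.sqrt.det := by
  have h : hB.posSemidef.sqrt.det * hB.posSemidef.sqrt.det = B.det := by
    rw [← det_mul, hB.posSemidef.sqrt_mul_self]
  have hBdet : B.det ≠ 0 := hB.det_pos.ne'
  refine isUnit_iff_ne_zero.2 fun h0 => hBdet ?_
  rw [← h, h0, mul_zero]

lemma vecBnorm_mulVec_le (hB : B.PosDef) (M : Matrix (Fin n) (Fin n) ℂ) (z : Fin n → ℂ) :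
    vecBnorm B (M *ᵥ z)
      ≤ ‖hB.posSemidef.sqrt * M * hB.posSemidef.sqrt⁻¹‖ * vecBnorm B z := by
  set S := hB.posSemidef.sqrt with hSdef
  have hSinv : S⁻¹ * S = 1 := nonsing_inv_mul S (sqrt_isUnit_det hB)
  rw [vecBnorm_eq_sqrtMul hB, vecBnorm_eq_sqrtMul hB]
  have hkey : S *ᵥ (M *ᵥ z) = (S * M * S⁻¹) *ᵥ (S *ᵥ z) := by
    rw [mulVec_mulVec, mulVec_mulVec, mul_assoc (S * M), hSinv, mul_one]
  rw [hkey]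
  exact l2_opNorm_mulVec (S * M * S⁻¹) ((EuclideanSpace.equiv (Fin n) ℂ).symm (S *ᵥ z))

lemma vecBnorm_pos (hB : B.PosDef) {x : Fin n → ℂ} (hx : x ≠ 0) : 0 < vecBnorm B x := by
  apply Real.sqrt_pos.2
  have := hB.re_dotProduct_pos hx
  simpa [RCLike.re_to_complex] using this

lemma vecBnorm_nonneg (x : Fin n → ℂ) : 0 ≤ vecBnorm B x := Real.sqrt_nonneg _

lemma contraction (hB : B.PosDef) {l : ℕ} {Q : Matrix (Fin n) (Fin l) ℂ}
    (hQ : Qᴴ * B * Q = 1) (v : Fin n → ℂ) :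
    vecBnorm B ((1 - Q * Qᴴ * B) *ᵥ v) ≤ vecBnorm B v := by
  have hBH : Bᴴ = B := hB.1
  have hQ' : ∀ X : Matrix (Fin l) (Fin n) ℂ, Qᴴ * (B * (Q * X)) = X := fun X => by
    rw [← Matrix.mul_assoc, ← Matrix.mul_assoc, hQ, Matrix.one_mul]
  set P : Matrix (Fin n) (Fin n) ℂ := Q * Qᴴ * B with hP
  set w := (1 - P) *ᵥ v with hw
  set p := P *ᵥ v with hp
  have key0 : (1 - P)ᴴ * (B * P) = 0 := by
    simp only [hP, conjTranspose_sub, conjTranspose_one, conjTranspose_mul, hBH,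
      conjTranspose_conjTranspose, sub_mul, one_mul]
    simp [Matrix.mul_assoc, hQ']
  have key1 : Pᴴ * (B * (1 - P)) = 0 := by
    simp only [hP, conjTranspose_mul, hBH, conjTranspose_conjTranspose,
      mul_sub, mul_one, sub_mul]
    simp [Matrix.mul_assoc, hQ']
  have hwp : star w ⬝ᵥ B *ᵥ p = 0 := by
    rw [hw, hp, star_mulVec, mulVec_mulVec, dotProduct_mulVec, vecMul_vecMul,
      key0, vecMul_zero, zero_dotProduct]
  have hpw : star p ⬝ᵥ B *ᵥ w = 0 := by
    rw [hp, hw, star_mulVec, mulVec_mulVec, dotProduct_mulVec, vecMul_vecMul,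
      key1, vecMul_zero, zero_dotProduct]
  have hv : w + p = v := by
    rw [hw, hp, sub_mulVec, one_mulVec, sub_add_cancel]
  have split : star v ⬝ᵥ B *ᵥ v = star w ⬝ᵥ B *ᵥ w + star p ⬝ᵥ B *ᵥ p := by
    rw [← hv]
    simp only [star_add, add_dotProduct, mulVec_add, dotProduct_add]
    rw [hwp, hpw]
    ring
  have hpos : 0 ≤ (star p ⬝ᵥ B *ᵥ p).re := by
    have := hB.posSemidef.re_dotProduct_nonneg p
    simpa [RCLike.re_to_complex] using this
  apply Real.sqrt_le_sqrt
  rw [split, Complex.add_re]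
  linarith

end main

/-- if CΩ = QR with Q*BQ = I, then for every F,
    ‖(I − P_B)C‖_B ≤ 2‖C − CΩF‖_B. -/
theorem statement11 {n l : ℕ} (B : Matrix (Fin n) (Fin n) ℂ) (hB : B.PosDef)
    (C : Matrix (Fin n) (Fin n) ℂ) (Ω : Matrix (Fin n) (Fin l) ℂ)
    (Q : Matrix (Fin n) (Fin l) ℂ) (R : Matrix (Fin l) (Fin l) ℂ)
    (hQR : C * Ω = Q * R) (hQ : Qᴴ * B * Q = 1)
    (F : Matrix (Fin l) (Fin n) ℂ) :
    matBnorm B ((1 - Q * Qᴴ * B) * C) ≤ 2 * matBnorm B (C - C * Ω * F) := by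
  set M := C - C * Ω * F with hM
  have hQ' : ∀ X : Matrix (Fin l) (Fin n) ℂ, Qᴴ * (B * (Q * X)) = X := fun X => by
    rw [← Matrix.mul_assoc, ← Matrix.mul_assoc, hQ, Matrix.one_mul]
  have hQl : ∀ X : Matrix (Fin l) (Fin l) ℂ, Qᴴ * (B * (Q * X)) = X := fun X => by
    rw [← Matrix.mul_assoc, ← Matrix.mul_assoc, hQ, Matrix.one_mul]
  have hzero : (1 - Q * Qᴴ * B) * (C * Ω) = 0 := by
    rw [Matrix.sub_mul, Matrix.one_mul, hQR]
    simp [Matrix.mul_assoc, hQl]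
  have hmat : (1 - Q * Qᴴ * B) * C = (1 - Q * Qᴴ * B) * M := by
    rw [hM, mul_sub]
    have h0 : (1 - Q * Qᴴ * B) * (C * Ω * F) = 0 := by
      rw [← Matrix.mul_assoc, hzero, Matrix.zero_mul]
    rw [h0, sub_zero]
  have hbdd : BddAbove {t : ℝ | ∃ x : Fin n → ℂ, x ≠ 0 ∧
      t = vecBnorm B (M *ᵥ x) / vecBnorm B x} := by
    refine ⟨‖hB.posSemidef.sqrt * M * hB.posSemidef.sqrt⁻¹‖, ?_⟩
    rintro t ⟨x, hx, rfl⟩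
    rw [div_le_iff₀ (vecBnorm_pos hB hx)]
    exact vecBnorm_mulVec_le hB M x
  have hsup0 : 0 ≤ sSup {t : ℝ | ∃ x : Fin n → ℂ, x ≠ 0 ∧
      t = vecBnorm B (M *ᵥ x) / vecBnorm B x} := by
    apply Real.sSup_nonneg
    rintro t ⟨x, hx, rfl⟩
    exact div_nonneg (vecBnorm_nonneg _) (vecBnorm_nonneg _)
  rw [matBnorm, matBnorm]
  apply Real.sSup_le
  · rintro t ⟨x, hx, rfl⟩
    have step1 : vecBnorm B (((1 - Q * Qᴴ * B) * C) *ᵥ x) / vecBnorm B x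
        = vecBnorm B ((1 - Q * Qᴴ * B) *ᵥ (M *ᵥ x)) / vecBnorm B x := by
      rw [hmat, ← mulVec_mulVec]
    have step2 : vecBnorm B ((1 - Q * Qᴴ * B) *ᵥ (M *ᵥ x)) / vecBnorm B x
        ≤ vecBnorm B (M *ᵥ x) / vecBnorm B x :=
      (div_le_div_iff_of_pos_right (vecBnorm_pos hB hx)).2 (contraction hB hQ _)
    have step3 : vecBnorm B (M *ᵥ x) / vecBnorm B x
        ≤ sSup {t : ℝ | ∃ x : Fin n → ℂ, x ≠ 0 ∧
            t = vecBnorm B (M *ᵥ x) / vecBnorm B x} :=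
      le_csSup hbdd ⟨x, hx, rfl⟩
    rw [step1]
    refine (step2.trans step3).trans ?_
    linarith
  · linarith
end
end

section
/- Let B ∈ ℂ^{n×n} be Hermitian positive definite and let C ∈ ℂ^{n×n} admit a factorization C = U·diag(Σ₁, Σ₂)·V*, where U ∈ ℂ^{n×n} satisfies U*BU = I, V ∈ ℂ^{n×n} is unitary, Σ₁ ∈ ℂ^{k×k} and Σ₂ ∈ ℂ^{(n−k)×(n−k)} are diagonal with nonnegative real entries. Let Ω ∈ ℂ^{n×(k+p)} and write V*Ω = [Ω₁; Ω₂], where Ω₁ consists of the first k rows and Ω₂ of the remaining n−k rows. Suppose X ∈ ℂ^{(k+p)×k} is a right inverse of Ω₁, i.e., Ω₁X = I_k, and set G = [X 0]·V* ∈ ℂ^{(k+p)×n} (the block [X 0] has X in its first k columns and zeros in the remaining n−k columns). Then ‖C − CΩG‖_B² ≤ ‖B⁻¹‖₂·( ‖Σ₂‖₂² + ‖Σ₂Ω₂X‖₂² ). -/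
open Matrix ComplexOrder

noncomputable section

section lems
variable {m n : Type*} [Fintype m] [Fintype n]

lemma vecNorm2_nonneg (x : m → ℂ) : 0 ≤ vecNorm2 x := Real.sqrt_nonneg _

@[simp] lemma vecNorm2_zero : vecNorm2 (0 : m → ℂ) = 0 := by simp [vecNorm2]

lemma vecNorm2_sq (x : m → ℂ) : vecNorm2 x ^ 2 = ∑ i, ‖x i‖ ^ 2 :=
  Real.sq_sqrt (by positivity)

lemma vecNorm2_pos {x : m → ℂ} (hx : x ≠ 0) : 0 < vecNorm2 x := by
  apply Real.sqrt_pos.2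
  obtain ⟨i, hi⟩ : ∃ i, x i ≠ 0 := by
    by_contra h; push_neg at h; exact hx (funext h)
  have h1 : 0 < ‖x i‖ ^ 2 := pow_pos (norm_pos_iff.2 hi) 2
  exact lt_of_lt_of_le h1 (Finset.single_le_sum (f := fun i => ‖x i‖ ^ 2)
    (fun _ _ => by positivity) (Finset.mem_univ i))

lemma star_dot_self (x : m → ℂ) : star x ⬝ᵥ x = ((∑ i, ‖x i‖ ^ 2 : ℝ) : ℂ) := by
  simp only [dotProduct, Pi.star_apply, RCLike.star_def]
  push_cast
  congr 1; funext i
  rw [Complex.conj_mul']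

lemma vecNorm2_eq_norm (x : m → ℂ) :
    vecNorm2 x = ‖(WithLp.equiv 2 (m → ℂ)).symm x‖ := by
  rw [EuclideanSpace.norm_eq]; rfl

lemma vecNorm2_add_le (u v : m → ℂ) : vecNorm2 (u + v) ≤ vecNorm2 u + vecNorm2 v := by
  simp only [vecNorm2_eq_norm]
  rw [show (WithLp.equiv 2 (m → ℂ)).symm (u + v)
      = (WithLp.equiv 2 (m → ℂ)).symm u + (WithLp.equiv 2 (m → ℂ)).symm v from rfl]
  exact norm_add_le _ _

lemma cauchy_schwarz_dot (u v : m → ℂ) : ‖star u ⬝ᵥ v‖ ≤ vecNorm2 u * vecNorm2 v := by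
  have := norm_inner_le_norm (𝕜 := ℂ)
    ((WithLp.equiv 2 (m → ℂ)).symm u) ((WithLp.equiv 2 (m → ℂ)).symm v)
  rw [← vecNorm2_eq_norm, ← vecNorm2_eq_norm] at this
  have h2 : (inner ℂ ((WithLp.equiv 2 (m → ℂ)).symm u) ((WithLp.equiv 2 (m → ℂ)).symm v) : ℂ)
      = star u ⬝ᵥ v := by
    rw [PiLp.inner_apply]
    simp [dotProduct, RCLike.inner_apply, mul_comm]
  rwa [h2] at this

end lems

section lems2
variable {m n : Type*} [Fintype m] [Fintype n]

lemma mulVec_vecNorm2_le (M : Matrix m n ℂ) (x : n → ℂ) :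
    vecNorm2 (M *ᵥ x) ≤ Real.sqrt (∑ i, ∑ j, ‖M i j‖ ^ 2) * vecNorm2 x := by
  have key : ∀ i, ‖(M *ᵥ x) i‖ ^ 2 ≤ (∑ j, ‖M i j‖ ^ 2) * (∑ j, ‖x j‖ ^ 2) := by
    intro i
    have h := cauchy_schwarz_dot (fun j => (starRingEnd ℂ) (M i j)) x
    have h1 : star (fun j => (starRingEnd ℂ) (M i j)) ⬝ᵥ x = (M *ᵥ x) i := by
      simp [dotProduct, mulVec]
    rw [h1] at h
    calc ‖(M *ᵥ x) i‖ ^ 2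
        ≤ (vecNorm2 (fun j => (starRingEnd ℂ) (M i j)) * vecNorm2 x) ^ 2 :=
          pow_le_pow_left₀ (norm_nonneg _) h 2
      _ = (∑ j, ‖M i j‖ ^ 2) * (∑ j, ‖x j‖ ^ 2) := by
          rw [mul_pow, vecNorm2_sq, vecNorm2_sq]; simp
  unfold vecNorm2
  rw [← Real.sqrt_mul (by positivity)]
  apply Real.sqrt_le_sqrt
  calc ∑ i, ‖(M *ᵥ x) i‖ ^ 2 ≤ ∑ i, (∑ j, ‖M i j‖ ^ 2) * (∑ j, ‖x j‖ ^ 2) :=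
        Finset.sum_le_sum fun i _ => key i
    _ = (∑ i, ∑ j, ‖M i j‖ ^ 2) * ∑ j, ‖x j‖ ^ 2 := by rw [Finset.sum_mul]

lemma specNorm_bddAbove (M : Matrix m n ℂ) :
    BddAbove {t : ℝ | ∃ x : n → ℂ, x ≠ 0 ∧ t = vecNorm2 (M *ᵥ x) / vecNorm2 x} := by
  refine ⟨Real.sqrt (∑ i, ∑ j, ‖M i j‖ ^ 2), ?_⟩
  rintro t ⟨x, hx, rfl⟩
  rw [div_le_iff₀ (vecNorm2_pos hx)]
  exact mulVec_vecNorm2_le M x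

lemma specNorm_nonneg (M : Matrix m n ℂ) : 0 ≤ specNorm M :=
  Real.sSup_nonneg (by
    rintro t ⟨x, hx, rfl⟩
    exact div_nonneg (vecNorm2_nonneg _) (vecNorm2_nonneg _))

lemma specNorm_mulVec_le (M : Matrix m n ℂ) (x : n → ℂ) :
    vecNorm2 (M *ᵥ x) ≤ specNorm M * vecNorm2 x := by
  rcases eq_or_ne x 0 with rfl | hx
  · simp [Matrix.mulVec_zero]
  · have h1 : vecNorm2 (M *ᵥ x) / vecNorm2 x ≤ specNorm M :=
      le_csSup (specNorm_bddAbove M) ⟨x, hx, rfl⟩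
    rw [div_le_iff₀ (vecNorm2_pos hx)] at h1
    linarith [h1]

lemma quadform_conj (A Mm : Matrix m m ℂ) (z : m → ℂ) :
    star (A *ᵥ z) ⬝ᵥ (Mm *ᵥ (A *ᵥ z)) = star z ⬝ᵥ ((Aᴴ * Mm * A) *ᵥ z) := by
  rw [star_mulVec, dotProduct_mulVec, vecMul_vecMul, dotProduct_mulVec,
    vecMul_vecMul, ← dotProduct_mulVec]

end lems2

section lems3
variable {m : Type*} [Fintype m] [DecidableEq m]

lemma dot_self_re (z : m → ℂ) : (star z ⬝ᵥ z).re = ∑ i, ‖z i‖ ^ 2 := by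
  rw [star_dot_self, Complex.ofReal_re]

lemma posdef_lower (B : Matrix m m ℂ) (hB : B.PosDef) (x : m → ℂ) :
    (∑ i, ‖x i‖ ^ 2) ≤ specNorm B⁻¹ * (star x ⬝ᵥ B *ᵥ x).re := by
  set S := (open scoped MatrixOrder in CFC.sqrt B) with hSdef
  have hS2 : S * S = B := (open scoped MatrixOrder in CFC.sqrt_mul_sqrt_self B hB.posSemidef.nonneg)
  have hSH : Sᴴ = S := (open scoped MatrixOrder in (CFC.sqrt_nonneg B).posSemidef.1)
  have hdetB : IsUnit B.det := by
    simpa using (isUnit_iff_ne_zero (a := B.det)).2 (by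
      have := hB.det_pos
      intro h
      rw [h] at this
      exact lt_irrefl 0 this)
  have hdetS : IsUnit S.det := by
    have : S.det * S.det = B.det := by rw [← Matrix.det_mul, hS2]
    rcases hdetB with u
    apply isUnit_of_mul_isUnit_left (y := S.det)
    rw [this]; exact hdetB
  have hSinv : S⁻¹ * S = 1 := Matrix.nonsing_inv_mul S hdetS
  have hBinvS : B⁻¹ * S = S⁻¹ := by
    rw [← hS2, Matrix.mul_inv_rev, Matrix.mul_assoc, hSinv, Matrix.mul_one]
  -- norm of S x squared equals quadratic form
  have hq : vecNorm2 (S *ᵥ x) ^ 2 = (star x ⬝ᵥ B *ᵥ x).re := by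
    rw [vecNorm2_sq, ← dot_self_re]
    congr 1
    have := quadform_conj S 1 x
    rw [Matrix.one_mulVec] at this
    rw [this, Matrix.mul_one, hSH, hS2]
  have hx2 : (∑ i, ‖x i‖ ^ 2) = (star (B⁻¹ *ᵥ (S *ᵥ x)) ⬝ᵥ (S *ᵥ x)).re := by
    rw [Matrix.mulVec_mulVec, hBinvS]
    have : star (S⁻¹ *ᵥ x) ⬝ᵥ (S *ᵥ x) = star x ⬝ᵥ x := by
      rw [star_mulVec, dotProduct_mulVec, vecMul_vecMul,
        Matrix.conjTranspose_nonsing_inv, hSH, hSinv, Matrix.vecMul_one]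
    rw [this, dot_self_re]
  have hcs : (star (B⁻¹ *ᵥ (S *ᵥ x)) ⬝ᵥ (S *ᵥ x)).re
      ≤ vecNorm2 (B⁻¹ *ᵥ (S *ᵥ x)) * vecNorm2 (S *ᵥ x) :=
    le_trans (Complex.re_le_norm _) (by
      exact cauchy_schwarz_dot _ _)
  have hspec := specNorm_mulVec_le B⁻¹ (S *ᵥ x)
  calc (∑ i, ‖x i‖ ^ 2) = (star (B⁻¹ *ᵥ (S *ᵥ x)) ⬝ᵥ (S *ᵥ x)).re := hx2
    _ ≤ vecNorm2 (B⁻¹ *ᵥ (S *ᵥ x)) * vecNorm2 (S *ᵥ x) := hcs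
    _ ≤ (specNorm B⁻¹ * vecNorm2 (S *ᵥ x)) * vecNorm2 (S *ᵥ x) :=
        mul_le_mul_of_nonneg_right hspec (vecNorm2_nonneg _)
    _ = specNorm B⁻¹ * (star x ⬝ᵥ B *ᵥ x).re := by
        rw [mul_assoc, ← sq, hq]

end lems3

set_option maxHeartbeats 1000000 in
/-- deterministic bound ‖C − CΩG‖_B² ≤ ‖B⁻¹‖₂(‖Σ₂‖₂² + ‖Σ₂Ω₂X‖₂²),
    where C = U·diag(Σ₁,Σ₂)·V*, U*BU = I, V unitary, Ω₁X = I_k and G = [X 0]V*.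
    The index set of size n is realized as `Fin k ⊕ Fin m` (n = k + m). -/
theorem statement12 {k m p : ℕ}
    (B : Matrix (Fin k ⊕ Fin m) (Fin k ⊕ Fin m) ℂ) (hB : B.PosDef)
    (U V C : Matrix (Fin k ⊕ Fin m) (Fin k ⊕ Fin m) ℂ)
    (hU : Uᴴ * B * U = 1) (hV : V ∈ Matrix.unitaryGroup (Fin k ⊕ Fin m) ℂ)
    (σ₁ : Fin k → ℝ) (σ₂ : Fin m → ℝ) (hσ₁ : ∀ i, 0 ≤ σ₁ i) (hσ₂ : ∀ i, 0 ≤ σ₂ i)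
    (hC : C = U * Matrix.fromBlocks
        (Matrix.diagonal fun i => (σ₁ i : ℂ)) 0 0
        (Matrix.diagonal fun i => (σ₂ i : ℂ)) * Vᴴ)
    (Ω : Matrix (Fin k ⊕ Fin m) (Fin (k + p)) ℂ)
    (Ω₁ : Matrix (Fin k) (Fin (k + p)) ℂ) (Ω₂ : Matrix (Fin m) (Fin (k + p)) ℂ)
    (hΩ₁ : Ω₁ = (Vᴴ * Ω).submatrix Sum.inl id)
    (hΩ₂ : Ω₂ = (Vᴴ * Ω).submatrix Sum.inr id)
    (X : Matrix (Fin (k + p)) (Fin k) ℂ) (hX : Ω₁ * X = 1)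
    (G : Matrix (Fin (k + p)) (Fin k ⊕ Fin m) ℂ)
    (hG : G = (Matrix.of fun i j => Sum.elim (fun a => X i a) (fun _ => (0 : ℂ)) j) * Vᴴ) :
    matBnorm B (C - C * Ω * G) ^ 2 ≤
      specNorm B⁻¹ *
        (specNorm (Matrix.diagonal fun i => (σ₂ i : ℂ)) ^ 2 +
          specNorm ((Matrix.diagonal fun i => (σ₂ i : ℂ)) * Ω₂ * X) ^ 2) := by
  set d₁ : Matrix (Fin k) (Fin k) ℂ := Matrix.diagonal fun i => (σ₁ i : ℂ) with hd₁
  set d₂ : Matrix (Fin m) (Fin m) ℂ := Matrix.diagonal fun i => (σ₂ i : ℂ) with hd₂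
  set N : Matrix (Fin m) (Fin k) ℂ := d₂ * Ω₂ * X with hN
  set F : Matrix (Fin k ⊕ Fin m) (Fin k ⊕ Fin m) ℂ :=
    Matrix.fromBlocks 0 0 (-N) d₂ with hF
  set s : ℝ := specNorm B⁻¹ with hs
  set s2 : ℝ := specNorm d₂ with hs2
  set s3 : ℝ := specNorm N with hs3
  set R : ℝ := s * (s2 ^ 2 + s3 ^ 2) with hR
  have hs0 : 0 ≤ s := specNorm_nonneg _
  have hs20 : 0 ≤ s2 := specNorm_nonneg _
  have hs30 : 0 ≤ s3 := specNorm_nonneg _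
  have hR0 : 0 ≤ R := by positivity
  -- V * Vᴴ = 1
  have hVV : V * Vᴴ = 1 := by
    have := (Matrix.mem_unitaryGroup_iff).mp hV
    rwa [Matrix.star_eq_conjTranspose] at this
  -- Step 1 : the error matrix factors as U * F * Vᴴ
  have hE : C - C * Ω * G = U * F * Vᴴ := by
    set XC : Matrix (Fin (k + p)) (Fin k ⊕ Fin m) ℂ :=
      Matrix.fromCols X (0 : Matrix (Fin (k + p)) (Fin m) ℂ) with hXC
    have hXO : (Matrix.of fun i j => Sum.elim (fun a => X i a) (fun _ => (0 : ℂ)) j :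
          Matrix (Fin (k + p)) (Fin k ⊕ Fin m) ℂ) = XC := by
      ext i j; cases j <;> simp [hXC]
    have hVO : Vᴴ * Ω = Matrix.fromRows Ω₁ Ω₂ := by
      ext i j; cases i <;> simp [hΩ₁, hΩ₂]
    have hY : (Vᴴ * Ω) * XC = Matrix.fromBlocks 1 0 (Ω₂ * X) 0 := by
      rw [hVO, hXC, Matrix.fromRows_mul_fromCols, hX]
      simp
    have hD : Matrix.fromBlocks d₁ 0 0 d₂ * Matrix.fromBlocks 1 0 (Ω₂ * X) 0
        = Matrix.fromBlocks d₁ 0 (d₂ * (Ω₂ * X)) 0 := by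
      rw [Matrix.fromBlocks_multiply]
      simp
    have hsub : Matrix.fromBlocks d₁ 0 0 d₂ - Matrix.fromBlocks d₁ 0 (d₂ * (Ω₂ * X)) 0
        = F := by
      rw [hF, hN, Matrix.mul_assoc, sub_eq_add_neg, Matrix.fromBlocks_neg,
        Matrix.fromBlocks_add]
      simp
    calc C - C * Ω * G
        = U * Matrix.fromBlocks d₁ 0 0 d₂ * Vᴴ
          - U * (Matrix.fromBlocks d₁ 0 0 d₂ * ((Vᴴ * Ω) * XC)) * Vᴴ := by
          rw [hC, hG, hXO]
          congr 1
          simp only [Matrix.mul_assoc]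
          rfl
      _ = U * F * Vᴴ := by
          rw [hY, hD, ← Matrix.sub_mul, ← Matrix.mul_sub, hsub]
  have hUnorm : ∀ z : (Fin k ⊕ Fin m) → ℂ, vecBnorm B (U *ᵥ z) = vecNorm2 z := by
    intro z
    simp only [vecBnorm, vecNorm2]
    rw [quadform_conj, hU, Matrix.one_mulVec, dot_self_re]
  have hxB2 : ∀ x : (Fin k ⊕ Fin m) → ℂ,
      (vecBnorm B x) ^ 2 = (star x ⬝ᵥ B *ᵥ x).re := fun x =>
    Real.sq_sqrt (hB.posSemidef.re_dotProduct_nonneg x)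
  have hBpos : ∀ x : (Fin k ⊕ Fin m) → ℂ, x ≠ 0 → 0 < vecBnorm B x := fun x hx =>
    Real.sqrt_pos.2 (hB.re_dotProduct_pos hx)
  have hsup : matBnorm B (C - C * Ω * G) ≤ Real.sqrt R := by
    apply Real.sSup_le _ (Real.sqrt_nonneg R)
    rintro t ⟨x, hx, rfl⟩
    set y := Vᴴ *ᵥ x with hy
    have hyx : vecNorm2 y = vecNorm2 x := by
      have h1 : star y ⬝ᵥ y = star x ⬝ᵥ x := by
        have h2 := quadform_conj Vᴴ 1 x
        rw [Matrix.one_mulVec] at h2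
        rw [hy, h2, Matrix.conjTranspose_conjTranspose, Matrix.mul_one, hVV,
          Matrix.one_mulVec]
      simp only [vecNorm2]
      congr 1
      rw [← dot_self_re, ← dot_self_re, h1]
    have hEx : (C - C * Ω * G) *ᵥ x = U *ᵥ (F *ᵥ y) := by
      rw [hE, ← Matrix.mulVec_mulVec, ← Matrix.mulVec_mulVec]
    have hnum : vecBnorm B ((C - C * Ω * G) *ᵥ x) = vecNorm2 (F *ᵥ y) := by
      rw [hEx, hUnorm]
    set y1 : Fin k → ℂ := fun a => y (Sum.inl a) with hy1
    set y2 : Fin m → ℂ := fun b => y (Sum.inr b) with hy2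
    have hyelim : y = Sum.elim y1 y2 := by funext i; cases i <;> rfl
    have hFy : F *ᵥ y = Sum.elim (0 : Fin k → ℂ) ((-N) *ᵥ y1 + d₂ *ᵥ y2) := by
      rw [hyelim, hF, Matrix.fromBlocks_mulVec]
      simp
    have ha := specNorm_mulVec_le N y1
    have hb := specNorm_mulVec_le d₂ y2
    have htri : vecNorm2 (F *ᵥ y) ≤ s3 * vecNorm2 y1 + s2 * vecNorm2 y2 := by
      rw [hFy]
      have h0 : vecNorm2 (Sum.elim (0 : Fin k → ℂ) ((-N) *ᵥ y1 + d₂ *ᵥ y2))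
          = vecNorm2 ((-N) *ᵥ y1 + d₂ *ᵥ y2) := by
        simp only [vecNorm2]
        congr 1
        rw [Fintype.sum_sum_type]
        simp
      have hneg : vecNorm2 ((-N) *ᵥ y1) = vecNorm2 (N *ᵥ y1) := by
        rw [Matrix.neg_mulVec]
        simp [vecNorm2]
      calc vecNorm2 (Sum.elim (0 : Fin k → ℂ) ((-N) *ᵥ y1 + d₂ *ᵥ y2))
          = vecNorm2 ((-N) *ᵥ y1 + d₂ *ᵥ y2) := h0
        _ ≤ vecNorm2 ((-N) *ᵥ y1) + vecNorm2 (d₂ *ᵥ y2) := vecNorm2_add_le _ _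
        _ ≤ s3 * vecNorm2 y1 + s2 * vecNorm2 y2 := by
            rw [hneg]; exact add_le_add ha hb
    have hy12 : vecNorm2 y1 ^ 2 + vecNorm2 y2 ^ 2 = vecNorm2 y ^ 2 := by
      rw [vecNorm2_sq, vecNorm2_sq, vecNorm2_sq, Fintype.sum_sum_type]
    have hFy2 : vecNorm2 (F *ᵥ y) ^ 2 ≤ (s2 ^ 2 + s3 ^ 2) * vecNorm2 x ^ 2 := by
      have h1 : vecNorm2 (F *ᵥ y) ^ 2 ≤ (s3 * vecNorm2 y1 + s2 * vecNorm2 y2) ^ 2 :=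
        pow_le_pow_left₀ (vecNorm2_nonneg _) htri 2
      have h2 : (s3 * vecNorm2 y1 + s2 * vecNorm2 y2) ^ 2
          ≤ (s2 ^ 2 + s3 ^ 2) * (vecNorm2 y1 ^ 2 + vecNorm2 y2 ^ 2) := by
        nlinarith [sq_nonneg (s3 * vecNorm2 y2 - s2 * vecNorm2 y1),
          vecNorm2_nonneg y1, vecNorm2_nonneg y2, hs20, hs30]
      calc vecNorm2 (F *ᵥ y) ^ 2 ≤ (s3 * vecNorm2 y1 + s2 * vecNorm2 y2) ^ 2 := h1
        _ ≤ (s2 ^ 2 + s3 ^ 2) * (vecNorm2 y1 ^ 2 + vecNorm2 y2 ^ 2) := h2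
        _ = (s2 ^ 2 + s3 ^ 2) * vecNorm2 x ^ 2 := by rw [hy12, hyx]
    have hden := hBpos x hx
    have hlow : vecNorm2 x ^ 2 ≤ s * vecBnorm B x ^ 2 := by
      rw [vecNorm2_sq, hxB2]
      exact posdef_lower B hB x
    rw [hnum]
    have ht0 : 0 ≤ vecNorm2 (F *ᵥ y) / vecBnorm B x :=
      div_nonneg (vecNorm2_nonneg _) hden.le
    have ht2 : (vecNorm2 (F *ᵥ y) / vecBnorm B x) ^ 2 ≤ R := by
      rw [div_pow, div_le_iff₀ (by positivity)]
      calc vecNorm2 (F *ᵥ y) ^ 2 ≤ (s2 ^ 2 + s3 ^ 2) * vecNorm2 x ^ 2 := hFy2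
        _ ≤ (s2 ^ 2 + s3 ^ 2) * (s * vecBnorm B x ^ 2) :=
            mul_le_mul_of_nonneg_left hlow (by positivity)
        _ = R * vecBnorm B x ^ 2 := by rw [hR]; ring
    have h3 := Real.sqrt_le_sqrt ht2
    rwa [Real.sqrt_sq ht0] at h3
  have hm0 : 0 ≤ matBnorm B (C - C * Ω * G) :=
    Real.sSup_nonneg (by
      rintro t ⟨x, hx, rfl⟩
      exact div_nonneg (Real.sqrt_nonneg _) (Real.sqrt_nonneg _))
  calc matBnorm B (C - C * Ω * G) ^ 2 ≤ Real.sqrt R ^ 2 :=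
      pow_le_pow_left₀ hm0 hsup 2
    _ = R := Real.sq_sqrt hR0
end
end
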